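/- For every n ≥ 1 and all nonnegative integers k_1, ..., k_{n-1}, there exists K (depending on n and k_1,...,k_{n-1}) such that for all k_n ≥ K, the (k_1,...,k_n)-caterpillar has unimodal independent set sequence. -/

import Mathlib

open Finset Polynomial
open scoped Classical

/-- A finset of vertices is an independent set: pairwise non-adjacent. -/
def IsIndepFinset {V : Type*} (G : SimpleGraph V) (s : Finset V) : Prop :=
  ∀ a ∈ s, ∀ b ∈ s, ¬ G.Adj a b

/-- `indepCount G t` is the number of independent sets of size `t` in `G`. -/
noncomputable def indepCount {V : Type*} [Fintype V] (G : SimpleGraph V) (t : ℕ) : ℕ :=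
  ((Finset.univ : Finset (Finset V)).filter (fun s => IsIndepFinset G s ∧ s.card = t)).card

/-- The independence polynomial of `G`, as a real polynomial:
`p(G,x) = ∑_t i_G(t) x^t`, i.e. the sum of `x^|s|` over all independent sets `s` of `G`. -/
noncomputable def indepPoly {V : Type*} [Fintype V] (G : SimpleGraph V) : Polynomial ℝ :=
  ∑ s ∈ (Finset.univ : Finset (Finset V)).filter (fun s => IsIndepFinset G s),
    (X : Polynomial ℝ) ^ s.card

/-- A real polynomial is LC⁺ if its coefficients up to its degree are positive and form a
log-concave sequence. -/
def LCPlus (p : Polynomial ℝ) : Prop :=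
  (∀ i ≤ p.natDegree, 0 < p.coeff i) ∧
  ∀ k : ℕ, p.coeff k * p.coeff (k + 2) ≤ p.coeff (k + 1) ^ 2

/-- A sequence of naturals is unimodal: it rises to some mode `m` and falls thereafter. -/
def UnimodalNat (a : ℕ → ℕ) : Prop :=
  ∃ m : ℕ, (∀ i j : ℕ, i ≤ j → j ≤ m → a i ≤ a j) ∧ (∀ i j : ℕ, m ≤ i → i ≤ j → a j ≤ a i)

/-- The `n`-concatenation `G^n(v,w)`: `n` disjoint copies of `G`, with the vertex `w` of the
`i`th copy joined to the vertex `v` of the `(i+1)`st copy. -/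
def concat {V : Type*} (G : SimpleGraph V) (v w : V) (n : ℕ) :
    SimpleGraph (V × Fin n) :=
  SimpleGraph.fromRel (fun p q =>
    (p.2 = q.2 ∧ G.Adj p.1 q.1) ∨ (p.1 = w ∧ q.1 = v ∧ (p.2 : ℕ) + 1 = (q.2 : ℕ)))

/-- `G - N[u]`: the induced subgraph of `G` on the vertices outside the closed neighborhood
of `u`. -/
def delNbhd {V : Type*} (G : SimpleGraph V) (u : V) :
    SimpleGraph {x : V // ¬ (x = u ∨ G.Adj u x)} :=
  G.comap Subtype.val

/-- The `(k 0, ..., k (n-1))`-caterpillar: a path on the vertices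
`Sum.inl 0, ..., Sum.inl (n-1)` with `k i` pendant leaves `Sum.inr ⟨i, t⟩` attached at the
`i`th path vertex. -/
def caterpillar (n : ℕ) (k : Fin n → ℕ) :
    SimpleGraph (Fin n ⊕ Σ i : Fin n, Fin (k i)) :=
  SimpleGraph.fromRel (fun p q =>
    (∃ i j : Fin n, p = Sum.inl i ∧ q = Sum.inl j ∧ (i : ℕ) + 1 = (j : ℕ)) ∨
    (∃ (i : Fin n) (t : Fin (k i)), p = Sum.inl i ∧ q = Sum.inr ⟨i, t⟩))

/-- For every `n ≥ 1` and all `k_1, ..., k_{n-1}`, if the number `kn` of pendant edges at the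
last path vertex is sufficiently large, the resulting caterpillar has unimodal independent
set sequence.  Here the path has `n + 1` vertices, `k` prescribes the pendant counts at the
first `n` vertices, and the count at the last vertex is replaced by `kn`. -/
def condChoose (N t s : ℕ) : ℕ := if s ≤ t then N.choose (t - s) else 0

lemma choose_mono_half {N r : ℕ} (h : 2*r + 1 ≤ N) : N.choose r ≤ N.choose (r+1) := by
  have key := Nat.choose_succ_right_eq N r
  have h1 : r + 1 ≤ N - r := by omega
  have h2 : N.choose r * (r+1) ≤ N.choose r * (N - r) := Nat.mul_le_mul_left _ h1
  rw [← key] at h2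
  exact Nat.le_of_mul_le_mul_right h2 (by omega)

lemma choose_anti_half {N r : ℕ} (h : N ≤ 2*r) : N.choose (r+1) ≤ N.choose r := by
  have key := Nat.choose_succ_right_eq N r
  have h1 : N - r ≤ r + 1 := by omega
  have h2 : N.choose r * (N - r) ≤ N.choose r * (r+1) := Nat.mul_le_mul_left _ h1
  rw [← key] at h2
  exact Nat.le_of_mul_le_mul_right h2 (by omega)


lemma key0 (L N j p j' p' : ℤ) (hj : 1 ≤ j) (hj' : 1 ≤ j') (hp : 0 ≤ p) (hp' : 0 ≤ p')
    (hjp : j + p = N) (hj'p' : j' + p' = N)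
    (h1 : j - p ≤ L) (h2 : p - j ≤ L) (h3 : j' - p' ≤ L) (h4 : p' - j' ≤ L)
    (hN : 20*L^2 + 20 ≤ N) :
    j*p'*((p'+1)*(j+1)) + j'*p*((p+1)*(j'+1)) ≤ 2*((p+1)*(j'+1))*((p'+1)*(j+1)) := by
  have hL : 0 ≤ L := by nlinarith [sq_nonneg L]
  subst hjp
  have hpp : p' = j + p - j' := by omega
  subst hpp
  set u := j - p with hu
  set v := j' - (j + p - j') with hv
  set w := v - u with hw
  have hid : 4*(2*((p+1)*(j'+1))*(((j+p-j')+1)*(j+1)) - j*(j+p-j')*(((j+p-j')+1)*(j+1)) - j'*p*((p+1)*(j'+1)))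
      = ((j+p)+1)*(2*((j+p)+2)^2 - 2*u*v - ((j+p)+2)*w^2) := by
    rw [hw, hu, hv]; ring
  have huv : u*v ≤ L^2 := by nlinarith [mul_nonneg (sub_nonneg.2 h1) (sub_nonneg.2 h4), mul_nonneg (sub_nonneg.2 h2) (sub_nonneg.2 h3)]
  have hw2 : w^2 ≤ 4*L^2 := by nlinarith
  have hpos : 0 ≤ 2*((j+p)+2)^2 - 2*u*v - ((j+p)+2)*w^2 := by nlinarith [sq_nonneg L]
  nlinarith [mul_nonneg (by linarith : (0:ℤ) ≤ (j+p)+1) hpos]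

lemma pairIneq (L N j j' : ℕ) (hj1 : 1 ≤ j) (hj'1 : 1 ≤ j')
    (hju : 2*j ≤ N + L) (hjl : N ≤ 2*j + L)
    (hj'u : 2*j' ≤ N + L) (hj'l : N ≤ 2*j' + L)
    (hN : 20*L^2 + 20 ≤ N) :
    N.choose (j-1) * N.choose (j'+1) + N.choose (j'-1) * N.choose (j+1)
      ≤ 2 * (N.choose j * N.choose j') := by
  have hLN : L ≤ N := by nlinarith [sq_nonneg L, Nat.zero_le L]
  have hjN : j ≤ N := by omega
  have hj'N : j' ≤ N := by omega
  obtain ⟨p, hp⟩ : ∃ p, N = j + p := ⟨N - j, by omega⟩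
  obtain ⟨p', hp'⟩ : ∃ p', N = j' + p' := ⟨N - j', by omega⟩
  obtain ⟨jm, rfl⟩ : ∃ jm, j = jm + 1 := ⟨j - 1, by omega⟩
  obtain ⟨jm', rfl⟩ : ∃ jm', j' = jm' + 1 := ⟨j' - 1, by omega⟩
  have I1 : N.choose (jm+1) * (jm+1) = N.choose jm * (p+1) := by
    have h := Nat.choose_succ_right_eq N jm
    rwa [show N - jm = p + 1 by omega] at h
  have I2 : N.choose (jm+1+1) * (jm+1+1) = N.choose (jm+1) * p := by
    have h := Nat.choose_succ_right_eq N (jm+1)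
    rwa [show N - (jm+1) = p by omega] at h
  have I3 : N.choose (jm'+1) * (jm'+1) = N.choose jm' * (p'+1) := by
    have h := Nat.choose_succ_right_eq N jm'
    rwa [show N - jm' = p' + 1 by omega] at h
  have I4 : N.choose (jm'+1+1) * (jm'+1+1) = N.choose (jm'+1) * p' := by
    have h := Nat.choose_succ_right_eq N (jm'+1)
    rwa [show N - (jm'+1) = p' by omega] at h
  have i1 : (N.choose (jm+1) : ℤ) * ((jm:ℤ)+1) = (N.choose jm : ℤ) * ((p:ℤ)+1) := by exact_mod_cast congrArg (Nat.cast : ℕ → ℤ) I1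
  have i2 : (N.choose (jm+1+1) : ℤ) * ((jm:ℤ)+1+1) = (N.choose (jm+1) : ℤ) * (p:ℤ) := by exact_mod_cast congrArg (Nat.cast : ℕ → ℤ) I2
  have i3 : (N.choose (jm'+1) : ℤ) * ((jm':ℤ)+1) = (N.choose jm' : ℤ) * ((p':ℤ)+1) := by exact_mod_cast congrArg (Nat.cast : ℕ → ℤ) I3
  have i4 : (N.choose (jm'+1+1) : ℤ) * ((jm':ℤ)+1+1) = (N.choose (jm'+1) : ℤ) * (p':ℤ) := by exact_mod_cast congrArg (Nat.cast : ℕ → ℤ) I4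
  simp only [Nat.add_sub_cancel]
  zify
  set A := (N.choose jm : ℤ) with hA
  set X := (N.choose (jm+1) : ℤ) with hX
  set A' := (N.choose jm' : ℤ) with hA'
  set Y := (N.choose (jm'+1) : ℤ) with hY
  set Z := (N.choose (jm+1+1) : ℤ) with hZ
  set Z' := (N.choose (jm'+1+1) : ℤ) with hZ'
  have key : ((jm:ℤ)+1)*(p':ℤ)*(((p':ℤ)+1)*(((jm:ℤ)+1)+1)) + ((jm':ℤ)+1)*(p:ℤ)*(((p:ℤ)+1)*(((jm':ℤ)+1)+1))
      ≤ 2*(((p:ℤ)+1)*(((jm':ℤ)+1)+1))*(((p':ℤ)+1)*(((jm:ℤ)+1)+1)) := by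
    apply key0 (L:ℤ) (N:ℤ) ((jm:ℤ)+1) (p:ℤ) ((jm':ℤ)+1) (p':ℤ)
      (by push_cast; omega) (by push_cast; omega) (by positivity) (by positivity)
      (by push_cast; omega) (by push_cast; omega)
      (by push_cast; omega) (by push_cast; omega) (by push_cast; omega) (by push_cast; omega)
      (by exact_mod_cast hN)
  have hE : (0:ℤ) < ((p:ℤ)+1)*(((jm':ℤ)+1)+1)*(((p':ℤ)+1)*(((jm:ℤ)+1)+1)) := by positivity
  rw [← mul_le_mul_iff_of_pos_right hE]
  have e1 : A*Z'*(((p:ℤ)+1)*(((jm':ℤ)+1)+1)*(((p':ℤ)+1)*(((jm:ℤ)+1)+1)))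
      = X*Y*(((jm:ℤ)+1)*(p':ℤ)*(((p':ℤ)+1)*(((jm:ℤ)+1)+1))) := by
    linear_combination ((((p':ℤ)+1)*(((jm:ℤ)+1)+1))*A*((p:ℤ)+1)) * i4 - ((((p':ℤ)+1)*(((jm:ℤ)+1)+1))*Y*(p':ℤ)) * i1
  have e2 : A'*Z*(((p:ℤ)+1)*(((jm':ℤ)+1)+1)*(((p':ℤ)+1)*(((jm:ℤ)+1)+1)))
      = X*Y*(((jm':ℤ)+1)*(p:ℤ)*(((p:ℤ)+1)*(((jm':ℤ)+1)+1))) := by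
    linear_combination ((((p:ℤ)+1)*(((jm':ℤ)+1)+1))*A'*((p':ℤ)+1)) * i2 - ((((p:ℤ)+1)*(((jm':ℤ)+1)+1))*X*(p:ℤ)) * i3
  have hXY : (0:ℤ) ≤ X*Y := by positivity
  calc (A*Z' + A'*Z) * (((p:ℤ)+1)*(((jm':ℤ)+1)+1)*(((p':ℤ)+1)*(((jm:ℤ)+1)+1)))
      = X*Y*(((jm:ℤ)+1)*(p':ℤ)*(((p':ℤ)+1)*(((jm:ℤ)+1)+1)) + ((jm':ℤ)+1)*(p:ℤ)*(((p:ℤ)+1)*(((jm':ℤ)+1)+1))) := by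
        rw [add_mul, e1, e2]; ring
    _ ≤ X*Y*(2*(((p:ℤ)+1)*(((jm':ℤ)+1)+1))*(((p':ℤ)+1)*(((jm:ℤ)+1)+1))) := by
        exact mul_le_mul_of_nonneg_left key hXY
    _ = 2*(X*Y)*(((p:ℤ)+1)*(((jm':ℤ)+1)+1)*(((p':ℤ)+1)*(((jm:ℤ)+1)+1))) := by ring

lemma windowLC (d N t : ℕ) (a : ℕ → ℕ)
    (h1 : N ≤ 2*(t+1)) (h2 : 2*(t+1) ≤ N + 2*d + 2)
    (hN : 20*(2*d+6)^2 + 20 ≤ N) (hdt : d + 1 ≤ t) :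
    (∑ s ∈ range (d+1), a s * N.choose (t - s)) * (∑ s ∈ range (d+1), a s * N.choose (t+2-s))
      ≤ (∑ s ∈ range (d+1), a s * N.choose (t+1-s)) * (∑ s ∈ range (d+1), a s * N.choose (t+1-s)) := by
  have pairT : ∀ s ∈ range (d+1), ∀ s' ∈ range (d+1),
      (a s * N.choose (t-s)) * (a s' * N.choose (t+2-s')) + (a s' * N.choose (t-s')) * (a s * N.choose (t+2-s))
      ≤ 2*((a s * N.choose (t+1-s)) * (a s' * N.choose (t+1-s'))) := by
    intro s hs s' hs'
    rw [mem_range] at hs hs'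
    have hp := pairIneq (2*d+6) N (t+1-s) (t+1-s') (by omega) (by omega) (by omega) (by omega)
      (by omega) (by omega) hN
    rw [show t+1-s-1 = t - s by omega, show t+1-s'+1 = t+2-s' by omega,
        show t+1-s'-1 = t - s' by omega, show t+1-s+1 = t+2-s by omega] at hp
    calc (a s * N.choose (t-s)) * (a s' * N.choose (t+2-s')) + (a s' * N.choose (t-s')) * (a s * N.choose (t+2-s))
        = (a s * a s') * (N.choose (t-s) * N.choose (t+2-s') + N.choose (t-s') * N.choose (t+2-s)) := by ring
      _ ≤ (a s * a s') * (2 * (N.choose (t+1-s) * N.choose (t+1-s'))) := Nat.mul_le_mul_left _ hp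
      _ = 2*((a s * N.choose (t+1-s)) * (a s' * N.choose (t+1-s'))) := by ring
  apply Nat.le_of_mul_le_mul_left _ (show 0 < 2 by norm_num)
  calc 2 * ((∑ s ∈ range (d+1), a s * N.choose (t - s)) * (∑ s ∈ range (d+1), a s * N.choose (t+2-s)))
      = (∑ s ∈ range (d+1), ∑ s' ∈ range (d+1), (a s * N.choose (t-s)) * (a s' * N.choose (t+2-s')))
        + (∑ s ∈ range (d+1), ∑ s' ∈ range (d+1), (a s' * N.choose (t-s')) * (a s * N.choose (t+2-s))) := by
        rw [two_mul]
        congr 1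
        · rw [Finset.sum_mul_sum]
        · rw [Finset.sum_mul_sum]; exact Finset.sum_comm
    _ = ∑ s ∈ range (d+1), ∑ s' ∈ range (d+1),
          ((a s * N.choose (t-s)) * (a s' * N.choose (t+2-s')) + (a s' * N.choose (t-s')) * (a s * N.choose (t+2-s))) := by
        rw [← Finset.sum_add_distrib]
        exact Finset.sum_congr rfl (fun s _ => by rw [← Finset.sum_add_distrib])
    _ ≤ ∑ s ∈ range (d+1), ∑ s' ∈ range (d+1),
          2*((a s * N.choose (t+1-s)) * (a s' * N.choose (t+1-s'))) := by
        exact Finset.sum_le_sum (fun s hs => Finset.sum_le_sum (fun s' hs' => pairT s hs s' hs'))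
    _ = 2 * ((∑ s ∈ range (d+1), a s * N.choose (t+1-s)) * (∑ s ∈ range (d+1), a s * N.choose (t+1-s))) := by
        rw [Finset.sum_mul_sum, Finset.mul_sum]
        exact Finset.sum_congr rfl (fun s _ => by rw [Finset.mul_sum])

lemma mono_run (f : ℕ → ℕ) (m : ℕ) (h : ∀ s, s < m → f s ≤ f (s+1)) :
    ∀ i j, i ≤ j → j ≤ m → f i ≤ f j := by
  intro i j hij
  induction j, hij using Nat.le_induction with
  | base => intro _; exact le_rfl
  | succ j hij ih =>
    intro hjm
    exact le_trans (ih (by omega)) (h j (by omega))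

lemma anti_run (f : ℕ → ℕ) (m : ℕ) (h : ∀ s, m ≤ s → f (s+1) ≤ f s) :
    ∀ i j, m ≤ i → i ≤ j → f j ≤ f i := by
  intro i j hmi hij
  induction j, hij using Nat.le_induction with
  | base => exact le_rfl
  | succ j hij ih => exact le_trans (h j (by omega)) ih

lemma glue (f : ℕ → ℕ) (r₀ t₁ : ℕ) (h01 : r₀ ≤ t₁ + 1)
    (hrise : ∀ t, t < r₀ → f t ≤ f (t+1))
    (hlc : ∀ t, r₀ ≤ t + 1 → t + 1 ≤ t₁ → f t * f (t+2) ≤ f (t+1) * f (t+1))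
    (hpos : ∀ t, t ≤ t₁ + 1 → 0 < f t)
    (hfall : ∀ t, t₁ ≤ t → f (t+1) ≤ f t) : UnimodalNat f := by
  by_cases hM : ∀ t, t < t₁ + 1 → f t ≤ f (t+1)
  · exact ⟨t₁+1, mono_run f (t₁+1) hM, anti_run f (t₁+1) (fun s hs => hfall s (by omega))⟩
  · push_neg at hM
    have hex : ∃ t, f (t+1) < f t := by obtain ⟨t, _, h⟩ := hM; exact ⟨t, h⟩
    set m := Nat.find hex with hm
    have hdesc : f (m+1) < f m := Nat.find_spec hex
    have hmin : ∀ s, s < m → f s ≤ f (s+1) := fun s hs => le_of_not_gt (Nat.find_min hex hs)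
    have hmr : r₀ ≤ m := by
      by_contra hc; push_neg at hc; exact absurd (hrise m hc) (not_le.2 hdesc)
    have hmt : m ≤ t₁ := by
      obtain ⟨t, ht, hlt⟩ := hM
      have := Nat.find_min' hex hlt
      omega
    have hstep : ∀ t, m ≤ t → t ≤ t₁ → f (t+1) < f t := by
      intro t hmt'
      induction t, hmt' using Nat.le_induction with
      | base => intro _; exact hdesc
      | succ t hmt'' ih =>
        intro htt
        have h1 : f (t+1) < f t := ih (by omega)
        have h2 := hlc t (by omega) (by omega)
        have hp : 0 < f (t+1) := hpos (t+1) (by omega)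
        have h3 : f (t+1) * f (t+1) < f t * f (t+1) := (mul_lt_mul_iff_of_pos_right hp).2 h1
        have h4 : f t * f (t+2) < f t * f (t+1) := lt_of_le_of_lt h2 h3
        exact lt_of_mul_lt_mul_left h4 (Nat.zero_le _)
    refine ⟨m, mono_run f m hmin, anti_run f m ?_⟩
    intro s hs
    rcases le_or_gt s t₁ with h | h
    · exact le_of_lt (hstep s hs h)
    · exact hfall s (by omega)

lemma condChoose_le_succ {N t s : ℕ} (h : 2*t + 1 ≤ N) : condChoose N t s ≤ condChoose N (t+1) s := by
  unfold condChoose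
  rcases le_or_gt s t with hst | hst
  · rw [if_pos hst, if_pos (by omega), show t + 1 - s = (t - s) + 1 by omega]
    exact choose_mono_half (by omega)
  · rw [if_neg (by omega)]
    exact Nat.zero_le _

lemma condChoose_succ_le {N t s : ℕ} (hs : s ≤ t) (h : N ≤ 2*(t - s)) :
    condChoose N (t+1) s ≤ condChoose N t s := by
  unfold condChoose
  rw [if_pos hs, if_pos (by omega), show t + 1 - s = (t - s) + 1 by omega]
  exact choose_anti_half h

theorem part2 (d : ℕ) (a b : ℕ → ℕ) (ha0 : 1 ≤ a 0) (hb : ∀ t, d < t → b t = 0) :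
    ∃ K, ∀ N, K ≤ N →
      UnimodalNat (fun t => (∑ s ∈ range (d+1), a s * condChoose N t s) + b t) := by
  classical
  set B := ∑ t ∈ range (d+1), b t with hB
  have hbB : ∀ t, b t ≤ B := by
    intro t
    rcases le_or_gt t d with h | h
    · exact Finset.single_le_sum (fun i _ => Nat.zero_le _) (mem_range.2 (by omega))
    · rw [hb t h]; exact Nat.zero_le _
  obtain ⟨P, hP⟩ : ∃ x, x = (B+2)*(d+2) := ⟨_, rfl⟩
  obtain ⟨E2, hE2⟩ : ∃ x, x = 20*(2*d+6)^2 + 20 := ⟨_, rfl⟩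
  refine ⟨E2 + P + 8*d + 40, fun N hN => ?_⟩
  have hNE : 20*(2*d+6)^2 + 20 ≤ N := by rw [← hE2]; omega
  set t₀ := (N-1)/2 with ht₀
  have hd0 : d + 1 ≤ t₀ := by omega
  apply glue _ (t₀+1) (t₀+d+1) (by omega)
  · -- rise
    intro t ht
    show _ ≤ _
    have hmono : ∀ s ∈ range (d+1), a s * condChoose N t s ≤ a s * condChoose N (t+1) s :=
      fun s _ => Nat.mul_le_mul_left _ (condChoose_le_succ (by omega))
    rcases le_or_gt t d with htd | htd
    · have hstep : (∑ s ∈ range (d+1), a s * condChoose N t s) + B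
          ≤ ∑ s ∈ range (d+1), a s * condChoose N (t+1) s := by
        rw [Finset.sum_range_succ', Finset.sum_range_succ' (fun s => a s * condChoose N (t+1) s)]
        have hA : ∑ s ∈ range d, a (s+1) * condChoose N t (s+1)
            ≤ ∑ s ∈ range d, a (s+1) * condChoose N (t+1) (s+1) :=
          Finset.sum_le_sum (fun s _ => Nat.mul_le_mul_left _ (condChoose_le_succ (by omega)))
        have e1 : condChoose N t 0 = N.choose t := by
          unfold condChoose; rw [if_pos (Nat.zero_le t), Nat.sub_zero]
        have e2 : condChoose N (t+1) 0 = N.choose (t+1) := by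
          unfold condChoose; rw [if_pos (Nat.zero_le _), Nat.sub_zero]
        have hch : N.choose t + B ≤ N.choose (t+1) := by
          obtain ⟨q, hq2⟩ : ∃ q, N = t + q := ⟨N - t, by omega⟩
          have hq : N.choose (t+1) * (t+1) = N.choose t * q := by
            have h := Nat.choose_succ_right_eq N t
            rwa [show N - t = q by omega] at h
          have hcpos : 1 ≤ N.choose t := Nat.choose_pos (by omega)
          have e3 : (B+1)*(t+1) ≤ P := by
            rw [hP]; exact Nat.mul_le_mul (by omega) (by omega)
          have hq3 : (B+1)*(t+1) ≤ q := by omega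
          have hmul : N.choose t * ((B+1)*(t+1)) ≤ N.choose t * q := Nat.mul_le_mul_left _ hq3
          have hfinal : (N.choose t + B) * (t+1) ≤ N.choose (t+1) * (t+1) := by nlinarith
          exact Nat.le_of_mul_le_mul_right hfinal (by omega)
        have h0 : a 0 * condChoose N t 0 + B ≤ a 0 * condChoose N (t+1) 0 := by
          rw [e1, e2]
          calc a 0 * N.choose t + B ≤ a 0 * N.choose t + a 0 * B := by
                have : B ≤ a 0 * B := Nat.le_mul_of_pos_left _ ha0
                omega
            _ = a 0 * (N.choose t + B) := by ring
            _ ≤ a 0 * N.choose (t+1) := Nat.mul_le_mul_left _ hch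
        omega
      have h1 : b t ≤ B := hbB t
      have h2 : (∑ s ∈ range (d+1), a s * condChoose N (t+1) s)
          ≤ (∑ s ∈ range (d+1), a s * condChoose N (t+1) s) + b (t+1) := Nat.le_add_right _ _
      omega
    · have hbt : b t = 0 := hb t htd
      have hbt1 : b (t+1) = 0 := hb _ (by omega)
      have hcc := Finset.sum_le_sum hmono
      omega
  · -- lc window
    intro t h1 h2
    show _ ≤ _
    have hbz : ∀ t', d < t' → b t' = 0 := hb
    have e : ∀ t', d + 1 ≤ t' →
        (∑ s ∈ range (d+1), a s * condChoose N t' s) = ∑ s ∈ range (d+1), a s * N.choose (t' - s) := by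
      intro t' h
      refine Finset.sum_congr rfl (fun s hs => ?_)
      rw [mem_range] at hs
      unfold condChoose
      rw [if_pos (by omega)]
    rw [hbz t (by omega), hbz (t+1) (by omega), hbz (t+2) (by omega),
        e t (by omega), e (t+1) (by omega), e (t+2) (by omega)]
    simp only [Nat.add_zero]
    have := windowLC d N t a (by omega) (by omega) hNE (by omega)
    convert this using 3 <;> omega
  · -- pos
    intro t ht
    show 0 < _
    have hpos : 0 < a 0 * condChoose N t 0 := by
      unfold condChoose
      rw [if_pos (Nat.zero_le _)]
      exact Nat.mul_pos ha0 (Nat.choose_pos (by omega))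
    have hle : a 0 * condChoose N t 0 ≤ ∑ s ∈ range (d+1), a s * condChoose N t s :=
      Finset.single_le_sum (f := fun s => a s * condChoose N t s) (fun i _ => Nat.zero_le _)
        (show (0:ℕ) ∈ range (d+1) from mem_range.2 (by omega))
    omega
  · -- fall
    intro t ht
    show _ ≤ _
    have hbt : b t = 0 := hb t (by omega)
    have hbt1 : b (t+1) = 0 := hb _ (by omega)
    have hcc : (∑ s ∈ range (d+1), a s * condChoose N (t+1) s)
        ≤ ∑ s ∈ range (d+1), a s * condChoose N t s := by
      refine Finset.sum_le_sum (fun s hs => ?_)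
      rw [mem_range] at hs
      exact Nat.mul_le_mul_left _ (condChoose_succ_le (by omega) (by omega))
    omega

-- ### part 1 definitions
abbrev catV (n : ℕ) (κ : Fin (n+1) → ℕ) := Fin (n+1) ⊕ Σ i : Fin (n+1), Fin (κ i)

def notLL {n : ℕ} {κ : Fin (n+1) → ℕ} (x : catV n κ) : Prop :=
  match x with
  | Sum.inl _ => True
  | Sum.inr ⟨i, _⟩ => i ≠ Fin.last n

lemma notLL_inl {n κ} (i : Fin (n+1)) : notLL (κ := κ) (Sum.inl i) := trivial

lemma LLform {n κ} (x : catV n κ) (hx : ¬ notLL x) :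
    ∃ j : Fin (κ (Fin.last n)), x = Sum.inr ⟨Fin.last n, j⟩ := by
  rcases x with i | ⟨i, t⟩
  · exact absurd trivial hx
  · have hi : i = Fin.last n := by
      by_contra hc; exact hx hc
    subst hi
    exact ⟨t, rfl⟩

lemma noAdj_LL_LL {n κ} (j j' : Fin (κ (Fin.last n))) :
    ¬ (caterpillar (n+1) κ).Adj (Sum.inr ⟨Fin.last n, j⟩) (Sum.inr ⟨Fin.last n, j'⟩) := by
  rw [caterpillar, SimpleGraph.fromRel_adj]
  rintro ⟨hne, h | h⟩ <;>
    rcases h with ⟨i, jj, h1, h2⟩ | ⟨i, tt, h1, h2⟩ <;> simp_all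

lemma adj_u_LL {n κ} (j : Fin (κ (Fin.last n))) :
    (caterpillar (n+1) κ).Adj (Sum.inl (Fin.last n)) (Sum.inr ⟨Fin.last n, j⟩) := by
  rw [caterpillar, SimpleGraph.fromRel_adj]
  exact ⟨by simp, Or.inl (Or.inr ⟨Fin.last n, j, rfl, rfl⟩)⟩

lemma noAdj_nonu_LL {n κ} (x : catV n κ) (hx : notLL x) (hu : x ≠ Sum.inl (Fin.last n))
    (j : Fin (κ (Fin.last n))) :
    ¬ (caterpillar (n+1) κ).Adj x (Sum.inr ⟨Fin.last n, j⟩) := by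
  rw [caterpillar, SimpleGraph.fromRel_adj]
  rintro ⟨hne, h | h⟩
  · rcases h with ⟨i, jj, h1, h2⟩ | ⟨i, tt, h1, h2⟩
    · simp_all
    · subst h1
      rw [Sum.inr.injEq, Sigma.mk.inj_iff] at h2
      exact hu (by rw [h2.1])
  · rcases h with ⟨i, jj, h1, h2⟩ | ⟨i, tt, h1, h2⟩ <;> simp_all

lemma indep_subset {V : Type*} {G : SimpleGraph V} {s s' : Finset V}
    (hsub : s' ⊆ s) (h : IsIndepFinset G s) : IsIndepFinset G s' :=
  fun a ha b hb => h a (hsub ha) b (hsub hb)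

lemma LLcard {n κ} :
    ((univ : Finset (catV n κ)).filter (fun x => ¬ notLL x)).card = κ (Fin.last n) := by
  have himg : ((univ : Finset (catV n κ)).filter (fun x => ¬ notLL x))
      = (univ : Finset (Fin (κ (Fin.last n)))).image (fun j => Sum.inr ⟨Fin.last n, j⟩) := by
    ext x
    simp only [mem_filter, mem_univ, true_and, mem_image]
    constructor
    · intro hx
      obtain ⟨j, rfl⟩ := LLform x hx
      exact ⟨j, rfl⟩
    · rintro ⟨j, rfl⟩
      intro hc
      exact hc rfl
  rw [himg, Finset.card_image_of_injective _ (fun a b h => by simpa using h)]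
  simp

lemma indep_union {n κ} (s₀ sl : Finset (catV n κ))
    (hind : IsIndepFinset (caterpillar (n+1) κ) s₀)
    (hcore : ∀ x ∈ s₀, notLL x) (hu : Sum.inl (Fin.last n) ∉ s₀)
    (hsl : ∀ x ∈ sl, ¬ notLL x) :
    IsIndepFinset (caterpillar (n+1) κ) (s₀ ∪ sl) := by
  intro a ha b hb
  rw [Finset.mem_union] at ha hb
  rcases ha with ha | ha <;> rcases hb with hb | hb
  · exact hind a ha b hb
  · obtain ⟨j, rfl⟩ := LLform b (hsl b hb)
    exact noAdj_nonu_LL a (hcore a ha) (fun he => hu (he ▸ ha)) j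
  · obtain ⟨j, rfl⟩ := LLform a (hsl a ha)
    intro hadj
    exact noAdj_nonu_LL b (hcore b hb) (fun he => hu (he ▸ hb)) j hadj.symm
  · obtain ⟨j, rfl⟩ := LLform a (hsl a ha)
    obtain ⟨j', rfl⟩ := LLform b (hsl b hb)
    exact noAdj_LL_LL j j'

noncomputable def aCnt (n : ℕ) (κ : Fin (n+1) → ℕ) (s : ℕ) : ℕ :=
  ((univ : Finset (Finset (catV n κ))).filter
    (fun s₀ => IsIndepFinset (caterpillar (n+1) κ) s₀ ∧ (∀ x ∈ s₀, notLL x) ∧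
      Sum.inl (Fin.last n) ∉ s₀ ∧ s₀.card = s)).card

noncomputable def bCnt (n : ℕ) (κ : Fin (n+1) → ℕ) (t : ℕ) : ℕ :=
  ((univ : Finset (Finset (catV n κ))).filter
    (fun s₀ => IsIndepFinset (caterpillar (n+1) κ) s₀ ∧ (∀ x ∈ s₀, notLL x) ∧
      Sum.inl (Fin.last n) ∈ s₀ ∧ s₀.card = t)).card

lemma fiber_u_mem {n κ} (t : ℕ) (s₀ : Finset (catV n κ))
    (hind : IsIndepFinset (caterpillar (n+1) κ) s₀)
    (hcore : ∀ x ∈ s₀, notLL x) (hu : Sum.inl (Fin.last n) ∈ s₀) :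
    ((((univ : Finset (Finset (catV n κ))).filter
        (fun s => IsIndepFinset (caterpillar (n+1) κ) s ∧ s.card = t)).filter
      (fun s => s.filter notLL = s₀)).card) = if s₀.card = t then 1 else 0 := by
  have hset : (((univ : Finset (Finset (catV n κ))).filter
        (fun s => IsIndepFinset (caterpillar (n+1) κ) s ∧ s.card = t)).filter
      (fun s => s.filter notLL = s₀)) = if s₀.card = t then {s₀} else ∅ := by
    ext s
    simp only [mem_filter, mem_univ, true_and]
    constructor
    · rintro ⟨⟨hindep, hcard⟩, hfil⟩
      have hsub : ∀ x ∈ s, notLL x := by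
        intro x hx
        by_contra hc
        obtain ⟨j, rfl⟩ := LLform x hc
        have hus : Sum.inl (Fin.last n) ∈ s := by
          have h2 := hu
          rw [← hfil] at h2
          exact Finset.mem_of_mem_filter _ h2
        exact hindep _ hus _ hx (adj_u_LL j)
      have hseq : s = s₀ := by rw [← hfil, Finset.filter_eq_self.2 hsub]
      subst hseq
      rw [if_pos hcard]
      exact mem_singleton_self _
    · intro hs
      by_cases hct : s₀.card = t
      · rw [if_pos hct, mem_singleton] at hs
        subst hs
        exact ⟨⟨hind, hct⟩, Finset.filter_eq_self.2 hcore⟩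
      · rw [if_neg hct] at hs
        exact absurd hs (notMem_empty _)
  rw [hset]
  split <;> simp

lemma fiber_u_not_mem {n κ} (t : ℕ) (s₀ : Finset (catV n κ))
    (hind : IsIndepFinset (caterpillar (n+1) κ) s₀)
    (hcore : ∀ x ∈ s₀, notLL x) (hu : Sum.inl (Fin.last n) ∉ s₀) :
    ((((univ : Finset (Finset (catV n κ))).filter
        (fun s => IsIndepFinset (caterpillar (n+1) κ) s ∧ s.card = t)).filter
      (fun s => s.filter notLL = s₀)).card) = condChoose (κ (Fin.last n)) t s₀.card := by
  rcases le_or_gt s₀.card t with hle | hlt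
  · unfold condChoose
    rw [if_pos hle, ← LLcard (n := n) (κ := κ), ← Finset.card_powersetCard]
    apply Finset.card_bij' (i := fun s _ => s.filter (fun x => ¬ notLL x))
      (j := fun sl _ => s₀ ∪ sl)
    · -- hi
      intro s hs
      simp only [mem_filter, mem_univ, true_and] at hs
      obtain ⟨⟨hindep, hcard⟩, hfil⟩ := hs
      rw [Finset.mem_powersetCard]
      constructor
      · intro x hx
        simp only [mem_filter, mem_univ, true_and]
        exact (Finset.mem_filter.1 hx).2
      · have hdisj : Disjoint (s.filter notLL) (s.filter (fun x => ¬ notLL x)) :=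
          Finset.disjoint_filter_filter_not s s notLL
        have hunion := Finset.filter_union_filter_not_eq notLL s
        have := Finset.card_union_of_disjoint hdisj
        rw [hunion] at this
        rw [hfil] at this
        omega
    · -- hj
      intro sl hsl
      rw [Finset.mem_powersetCard] at hsl
      obtain ⟨hsub, hcard⟩ := hsl
      have hslLL : ∀ x ∈ sl, ¬ notLL x := fun x hx => (mem_filter.1 (hsub hx)).2
      have hdisj : Disjoint s₀ sl := by
        rw [Finset.disjoint_left]
        intro x hx hx'
        exact hslLL x hx' (hcore x hx)
      simp only [mem_filter, mem_univ, true_and]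
      refine ⟨⟨indep_union s₀ sl hind hcore hu hslLL, ?_⟩, ?_⟩
      · rw [Finset.card_union_of_disjoint hdisj]
        omega
      · rw [Finset.filter_union, Finset.filter_eq_self.2 hcore,
          Finset.filter_eq_empty_iff.2 (fun x hx => by simp [hslLL x hx]), Finset.union_empty]
    · -- left_inv
      intro s hs
      simp only [mem_filter, mem_univ, true_and] at hs
      rw [← hs.2]
      exact Finset.filter_union_filter_not_eq notLL s
    · -- right_inv
      intro sl hsl
      rw [Finset.mem_powersetCard] at hsl
      have hslLL : ∀ x ∈ sl, ¬ notLL x := fun x hx => (mem_filter.1 (hsl.1 hx)).2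
      rw [Finset.filter_union]
      rw [Finset.filter_eq_empty_iff.2 (fun x hx => by simp [hcore x hx]),
        Finset.filter_eq_self.2 hslLL, Finset.empty_union]
  · unfold condChoose
    rw [if_neg (by omega)]
    rw [Finset.card_eq_zero, Finset.filter_eq_empty_iff]
    intro s hs
    simp only [mem_filter, mem_univ, true_and] at hs
    intro hfil
    have : s₀ ⊆ s := by
      rw [← hfil]
      exact Finset.filter_subset _ _
    have := Finset.card_le_card this
    omega

theorem decomp (n : ℕ) (κ : Fin (n+1) → ℕ) (t D : ℕ)
    (hD : ∀ s₀ : Finset (catV n κ), (∀ x ∈ s₀, notLL x) → s₀.card ≤ D) :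
    indepCount (caterpillar (n+1) κ) t =
      (∑ s ∈ range (D+1), aCnt n κ s * condChoose (κ (Fin.last n)) t s) + bCnt n κ t := by
  classical
  rw [indepCount]
  set S := (univ : Finset (Finset (catV n κ))).filter
    (fun s => IsIndepFinset (caterpillar (n+1) κ) s ∧ s.card = t) with hS
  set T := (univ : Finset (Finset (catV n κ))).filter
    (fun s₀ => IsIndepFinset (caterpillar (n+1) κ) s₀ ∧ ∀ x ∈ s₀, notLL x) with hT
  have hmaps : ∀ s ∈ S, s.filter notLL ∈ T := by
    intro s hs
    rw [hS, mem_filter] at hs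
    rw [hT, mem_filter]
    exact ⟨mem_univ _, indep_subset (filter_subset _ _) hs.2.1,
      fun x hx => (mem_filter.1 hx).2⟩
  rw [Finset.card_eq_sum_card_fiberwise hmaps]
  have hval : ∀ s₀ ∈ T, (S.filter (fun s => s.filter notLL = s₀)).card =
      if Sum.inl (Fin.last n) ∈ s₀ then (if s₀.card = t then 1 else 0)
      else condChoose (κ (Fin.last n)) t s₀.card := by
    intro s₀ hs₀
    rw [hT, mem_filter] at hs₀
    by_cases hu : Sum.inl (Fin.last n) ∈ s₀
    · rw [if_pos hu]
      exact fiber_u_mem t s₀ hs₀.2.1 hs₀.2.2 hu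
    · rw [if_neg hu]
      exact fiber_u_not_mem t s₀ hs₀.2.1 hs₀.2.2 hu
  rw [Finset.sum_congr rfl hval]
  rw [← Finset.sum_filter_add_sum_filter_not T (fun s₀ => Sum.inl (Fin.last n) ∈ s₀)]
  have hb : ∑ s₀ ∈ T.filter (fun s₀ => Sum.inl (Fin.last n) ∈ s₀),
      (if Sum.inl (Fin.last n) ∈ s₀ then (if s₀.card = t then 1 else 0)
       else condChoose (κ (Fin.last n)) t s₀.card) = bCnt n κ t := by
    rw [Finset.sum_congr rfl (fun s₀ h => if_pos (mem_filter.1 h).2)]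
    rw [Finset.sum_boole]
    rw [Nat.cast_id]
    unfold bCnt
    congr 1
    ext s₀
    simp only [hT, mem_filter, mem_univ, true_and]
    tauto
  have ha : ∑ s₀ ∈ T.filter (fun s₀ => ¬ Sum.inl (Fin.last n) ∈ s₀),
      (if Sum.inl (Fin.last n) ∈ s₀ then (if s₀.card = t then 1 else 0)
       else condChoose (κ (Fin.last n)) t s₀.card)
      = ∑ s ∈ range (D+1), aCnt n κ s * condChoose (κ (Fin.last n)) t s := by
    rw [Finset.sum_congr rfl (fun s₀ h => if_neg (mem_filter.1 h).2)]
    have hmaps2 : ∀ s₀ ∈ T.filter (fun s₀ => ¬ Sum.inl (Fin.last n) ∈ s₀),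
        s₀.card ∈ range (D+1) := by
      intro s₀ h
      rw [mem_filter, hT, mem_filter] at h
      rw [mem_range]
      have := hD s₀ h.1.2.2
      omega
    rw [← Finset.sum_fiberwise_of_maps_to hmaps2
      (fun s₀ => condChoose (κ (Fin.last n)) t s₀.card)]
    apply Finset.sum_congr rfl
    intro j hj
    rw [Finset.sum_congr rfl
      (fun s₀ h => by rw [(mem_filter.1 h).2] :
        ∀ s₀ ∈ (T.filter (fun s₀ => ¬ Sum.inl (Fin.last n) ∈ s₀)).filter (fun s₀ => s₀.card = j),
          condChoose (κ (Fin.last n)) t s₀.card = condChoose (κ (Fin.last n)) t j)]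
    rw [Finset.sum_const, smul_eq_mul]
    congr 1
    unfold aCnt
    congr 1
    ext s₀
    simp only [hT, mem_filter, mem_univ, true_and]
    tauto
  rw [hb, ha, add_comm]

section transfer
variable {n : ℕ} {κ κ' : Fin (n+1) → ℕ}

def Fmap (hag : ∀ i, i ≠ Fin.last n → κ i = κ' i) : catV n κ → catV n κ'
  | Sum.inl i => Sum.inl i
  | Sum.inr ⟨i, t⟩ =>
    if h : i = Fin.last n then Sum.inl i
    else Sum.inr ⟨i, Fin.cast (hag i h) t⟩

lemma Fmap_inl (hag : ∀ i, i ≠ Fin.last n → κ i = κ' i) (i : Fin (n+1)) :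
    Fmap hag (Sum.inl i) = Sum.inl i := rfl

lemma Fmap_inr (hag : ∀ i, i ≠ Fin.last n → κ i = κ' i) {i : Fin (n+1)}
    (hi : i ≠ Fin.last n) (t : Fin (κ i)) :
    Fmap hag (Sum.inr ⟨i, t⟩) = Sum.inr ⟨i, Fin.cast (hag i hi) t⟩ := by
  simp [Fmap, hi]

lemma Fmap_notLL (hag : ∀ i, i ≠ Fin.last n → κ i = κ' i) (x : catV n κ) (hx : notLL x) :
    notLL (Fmap hag x) := by
  rcases x with i | ⟨i, t⟩
  · trivial
  · have hi : i ≠ Fin.last n := hx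
    rw [Fmap_inr hag hi]
    exact hi

lemma Fmap_inl_iff (hag : ∀ i, i ≠ Fin.last n → κ i = κ' i) {x : catV n κ} (hx : notLL x)
    (i : Fin (n+1)) : Fmap hag x = Sum.inl i ↔ x = Sum.inl i := by
  rcases x with a | ⟨a, t⟩
  · simp [Fmap_inl]
  · have ha : a ≠ Fin.last n := hx
    rw [Fmap_inr hag ha]
    simp

lemma Fmap_inr_shape (hag : ∀ i, i ≠ Fin.last n → κ i = κ' i) {x : catV n κ} (hx : notLL x)
    {i : Fin (n+1)} {tt : Fin (κ' i)} (h : Fmap hag x = Sum.inr ⟨i, tt⟩) :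
    ∃ t : Fin (κ i), x = Sum.inr ⟨i, t⟩ := by
  rcases x with a | ⟨a, t⟩
  · rw [Fmap_inl] at h
    exact absurd h (by simp)
  · have ha : a ≠ Fin.last n := hx
    rw [Fmap_inr hag ha, Sum.inr.injEq, Sigma.mk.inj_iff] at h
    obtain ⟨rfl, _⟩ := h
    exact ⟨t, rfl⟩

lemma Fmap_inj (hag : ∀ i, i ≠ Fin.last n → κ i = κ' i) {x y : catV n κ}
    (hx : notLL x) (hy : notLL y) (h : Fmap hag x = Fmap hag y) : x = y := by
  rcases x with a | ⟨a, t⟩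
  · rw [Fmap_inl] at h
    rw [(Fmap_inl_iff hag hy a).1 h.symm]
  · have ha : a ≠ Fin.last n := hx
    rw [Fmap_inr hag ha] at h
    obtain ⟨t', rfl⟩ := Fmap_inr_shape hag hy h.symm
    have hy' : a ≠ Fin.last n := hy
    rw [Fmap_inr hag hy', Sum.inr.injEq, Sigma.mk.inj_iff] at h
    obtain ⟨-, hh⟩ := h
    have : (t : ℕ) = (t' : ℕ) := by
      have := congrArg (fun z : Fin (κ' a) => (z : ℕ)) (eq_of_heq hh)
      simpa using this
    rw [Sum.inr.injEq, Sigma.mk.inj_iff]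
    exact ⟨rfl, heq_of_eq (Fin.ext this)⟩

lemma Fmap_Fmap (hag : ∀ i, i ≠ Fin.last n → κ i = κ' i)
    (hag' : ∀ i, i ≠ Fin.last n → κ' i = κ i) (x : catV n κ) (hx : notLL x) :
    Fmap hag' (Fmap hag x) = x := by
  rcases x with a | ⟨a, t⟩
  · rfl
  · have ha : a ≠ Fin.last n := hx
    rw [Fmap_inr hag ha, Fmap_inr hag' ha, Sum.inr.injEq, Sigma.mk.inj_iff]
    exact ⟨rfl, heq_of_eq (Fin.ext (by simp))⟩

lemma Fmap_adj (hag : ∀ i, i ≠ Fin.last n → κ i = κ' i) (x y : catV n κ)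
    (hx : notLL x) (hy : notLL y) :
    (caterpillar (n+1) κ').Adj (Fmap hag x) (Fmap hag y) ↔ (caterpillar (n+1) κ).Adj x y := by
  rw [caterpillar, caterpillar, SimpleGraph.fromRel_adj, SimpleGraph.fromRel_adj]
  have hne : Fmap hag x ≠ Fmap hag y ↔ x ≠ y := by
    constructor
    · intro h hc; exact h (hc ▸ rfl)
    · intro h hc; exact h (Fmap_inj hag hx hy hc)
  have hrel : ∀ (p q : catV n κ), notLL p → notLL q →
      (((∃ i j : Fin (n+1), Fmap hag p = Sum.inl i ∧ Fmap hag q = Sum.inl j ∧ (i : ℕ) + 1 = (j : ℕ)) ∨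
        (∃ (i : Fin (n+1)) (tt : Fin (κ' i)), Fmap hag p = Sum.inl i ∧ Fmap hag q = Sum.inr ⟨i, tt⟩)) ↔
       ((∃ i j : Fin (n+1), p = Sum.inl i ∧ q = Sum.inl j ∧ (i : ℕ) + 1 = (j : ℕ)) ∨
        (∃ (i : Fin (n+1)) (t : Fin (κ i)), p = Sum.inl i ∧ q = Sum.inr ⟨i, t⟩))) := by
    intro p q hp hq
    constructor
    · rintro (⟨i, j, h1, h2, h3⟩ | ⟨i, tt, h1, h2⟩)
      · exact Or.inl ⟨i, j, (Fmap_inl_iff hag hp i).1 h1, (Fmap_inl_iff hag hq j).1 h2, h3⟩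
      · obtain ⟨t, rfl⟩ := Fmap_inr_shape hag hq h2
        exact Or.inr ⟨i, t, (Fmap_inl_iff hag hp i).1 h1, rfl⟩
    · rintro (⟨i, j, rfl, rfl, h3⟩ | ⟨i, t, rfl, rfl⟩)
      · exact Or.inl ⟨i, j, rfl, rfl, h3⟩
      · have hi : i ≠ Fin.last n := hq
        exact Or.inr ⟨i, Fin.cast (hag i hi) t, rfl, Fmap_inr hag hi t⟩
  exact and_congr hne (or_congr (hrel x y hx hy) (hrel y x hy hx))

lemma aCnt_transfer (hag : ∀ i, i ≠ Fin.last n → κ i = κ' i)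
    (hag' : ∀ i, i ≠ Fin.last n → κ' i = κ i) (s : ℕ) :
    aCnt n κ s = aCnt n κ' s := by
  unfold aCnt
  apply Finset.card_bij' (i := fun s₀ _ => s₀.image (Fmap hag))
    (j := fun s₀ _ => s₀.image (Fmap hag'))
  · intro s₀ hs₀
    simp only [mem_filter, mem_univ, true_and] at hs₀
    rw [Finset.image_image]
    exact (Finset.image_congr (fun x hx => Fmap_Fmap hag hag' x (hs₀.2.1 x hx))).trans Finset.image_id
  · intro s₀ hs₀
    simp only [mem_filter, mem_univ, true_and] at hs₀
    rw [Finset.image_image]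
    exact (Finset.image_congr (fun x hx => Fmap_Fmap hag' hag x (hs₀.2.1 x hx))).trans Finset.image_id

  · intro s₀ hs₀
    simp only [mem_filter, mem_univ, true_and] at hs₀ ⊢
    obtain ⟨hind, hcore, hu, hcard⟩ := hs₀
    refine ⟨?_, ?_, ?_, ?_⟩
    · intro a ha b hb
      obtain ⟨x, hx, rfl⟩ := Finset.mem_image.1 ha
      obtain ⟨y, hy, rfl⟩ := Finset.mem_image.1 hb
      rw [Fmap_adj hag x y (hcore x hx) (hcore y hy)]
      exact hind x hx y hy
    · intro a ha
      obtain ⟨x, hx, rfl⟩ := Finset.mem_image.1 ha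
      exact Fmap_notLL hag x (hcore x hx)
    · intro hc
      obtain ⟨x, hx, hxx⟩ := Finset.mem_image.1 hc
      rw [Fmap_inl_iff hag (hcore x hx)] at hxx
      exact hu (hxx ▸ hx)
    · rw [Finset.card_image_of_injOn (fun x hx y hy h => Fmap_inj hag (hcore x hx) (hcore y hy) h)]
      exact hcard
  · intro s₀ hs₀
    simp only [mem_filter, mem_univ, true_and] at hs₀ ⊢
    obtain ⟨hind, hcore, hu, hcard⟩ := hs₀
    refine ⟨?_, ?_, ?_, ?_⟩
    · intro a ha b hb
      obtain ⟨x, hx, rfl⟩ := Finset.mem_image.1 ha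
      obtain ⟨y, hy, rfl⟩ := Finset.mem_image.1 hb
      rw [Fmap_adj hag' x y (hcore x hx) (hcore y hy)]
      exact hind x hx y hy
    · intro a ha
      obtain ⟨x, hx, rfl⟩ := Finset.mem_image.1 ha
      exact Fmap_notLL hag' x (hcore x hx)
    · intro hc
      obtain ⟨x, hx, hxx⟩ := Finset.mem_image.1 hc
      rw [Fmap_inl_iff hag' (hcore x hx)] at hxx
      exact hu (hxx ▸ hx)
    · rw [Finset.card_image_of_injOn (fun x hx y hy h => Fmap_inj hag' (hcore x hx) (hcore y hy) h)]
      exact hcard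
lemma bCnt_transfer (hag : ∀ i, i ≠ Fin.last n → κ i = κ' i)
    (hag' : ∀ i, i ≠ Fin.last n → κ' i = κ i) (t : ℕ) :
    bCnt n κ t = bCnt n κ' t := by
  unfold bCnt
  apply Finset.card_bij' (i := fun s₀ _ => s₀.image (Fmap hag))
    (j := fun s₀ _ => s₀.image (Fmap hag'))
  · intro s₀ hs₀
    simp only [mem_filter, mem_univ, true_and] at hs₀
    rw [Finset.image_image]
    exact (Finset.image_congr (fun x hx => Fmap_Fmap hag hag' x (hs₀.2.1 x hx))).trans Finset.image_id
  · intro s₀ hs₀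
    simp only [mem_filter, mem_univ, true_and] at hs₀
    rw [Finset.image_image]
    exact (Finset.image_congr (fun x hx => Fmap_Fmap hag' hag x (hs₀.2.1 x hx))).trans Finset.image_id

  · intro s₀ hs₀
    simp only [mem_filter, mem_univ, true_and] at hs₀ ⊢
    obtain ⟨hind, hcore, hu, hcard⟩ := hs₀
    refine ⟨?_, ?_, ?_, ?_⟩
    · intro a ha b hb
      obtain ⟨x, hx, rfl⟩ := Finset.mem_image.1 ha
      obtain ⟨y, hy, rfl⟩ := Finset.mem_image.1 hb
      rw [Fmap_adj hag x y (hcore x hx) (hcore y hy)]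
      exact hind x hx y hy
    · intro a ha
      obtain ⟨x, hx, rfl⟩ := Finset.mem_image.1 ha
      exact Fmap_notLL hag x (hcore x hx)
    · exact Finset.mem_image.2 ⟨_, hu, rfl⟩
    · rw [Finset.card_image_of_injOn (fun x hx y hy h => Fmap_inj hag (hcore x hx) (hcore y hy) h)]
      exact hcard
  · intro s₀ hs₀
    simp only [mem_filter, mem_univ, true_and] at hs₀ ⊢
    obtain ⟨hind, hcore, hu, hcard⟩ := hs₀
    refine ⟨?_, ?_, ?_, ?_⟩
    · intro a ha b hb
      obtain ⟨x, hx, rfl⟩ := Finset.mem_image.1 ha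
      obtain ⟨y, hy, rfl⟩ := Finset.mem_image.1 hb
      rw [Fmap_adj hag' x y (hcore x hx) (hcore y hy)]
      exact hind x hx y hy
    · intro a ha
      obtain ⟨x, hx, rfl⟩ := Finset.mem_image.1 ha
      exact Fmap_notLL hag' x (hcore x hx)
    · exact Finset.mem_image.2 ⟨_, hu, rfl⟩
    · rw [Finset.card_image_of_injOn (fun x hx y hy h => Fmap_inj hag' (hcore x hx) (hcore y hy) h)]
      exact hcard
lemma core_card_transfer (hag : ∀ i, i ≠ Fin.last n → κ i = κ' i)
    (hag' : ∀ i, i ≠ Fin.last n → κ' i = κ i) :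
    ((univ : Finset (catV n κ)).filter (fun x => notLL x)).card
      = ((univ : Finset (catV n κ')).filter (fun x => notLL x)).card := by
  apply Finset.card_bij' (i := fun x _ => Fmap hag x) (j := fun x _ => Fmap hag' x)
  · intro x hx
    simp only [mem_filter, mem_univ, true_and] at hx ⊢
    exact Fmap_notLL hag x hx
  · intro x hx
    simp only [mem_filter, mem_univ, true_and] at hx ⊢
    exact Fmap_notLL hag' x hx
  · intro x hx
    simp only [mem_filter, mem_univ, true_and] at hx
    exact Fmap_Fmap hag hag' x hx
  · intro x hx
    simp only [mem_filter, mem_univ, true_and] at hx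
    exact Fmap_Fmap hag' hag x hx

end transfer


-- ### final assembly

theorem caterpillar_indepSeq_unimodal (n : ℕ) (k : Fin (n + 1) → ℕ) :
    ∃ K : ℕ, ∀ kn : ℕ, K ≤ kn →
      UnimodalNat (indepCount (caterpillar (n + 1) (Function.update k (Fin.last n) kn))) := by
  classical
  set κ₀ := Function.update k (Fin.last n) 0 with hκ₀
  set D := ((univ : Finset (catV n κ₀)).filter (fun x => notLL x)).card with hDdef
  have ha0 : 1 ≤ aCnt n κ₀ 0 := by
    rw [aCnt]
    apply Finset.card_pos.2
    refine ⟨∅, mem_filter.2 ⟨mem_univ _, ?_, ?_, ?_, ?_⟩⟩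
    · intro a ha; exact absurd ha (notMem_empty _)
    · intro x hx; exact absurd hx (notMem_empty _)
    · exact notMem_empty _
    · exact Finset.card_empty
  have hbD : ∀ t, D < t → bCnt n κ₀ t = 0 := by
    intro t ht
    rw [bCnt, Finset.card_eq_zero, Finset.filter_eq_empty_iff]
    intro s₀ _
    rintro ⟨hind, hcore, hu, hcard⟩
    have hsub : s₀ ⊆ (univ : Finset (catV n κ₀)).filter (fun x => notLL x) :=
      fun x hx => mem_filter.2 ⟨mem_univ _, hcore x hx⟩
    have h2 : s₀.card ≤ D := by rw [hDdef]; exact Finset.card_le_card hsub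
    omega
  obtain ⟨K, hK⟩ := part2 D (aCnt n κ₀) (bCnt n κ₀) ha0 hbD
  refine ⟨K, fun kn hkn => ?_⟩
  have hag : ∀ i, i ≠ Fin.last n → Function.update k (Fin.last n) kn i = κ₀ i := by
    intro i hi
    rw [hκ₀, Function.update_of_ne hi, Function.update_of_ne hi]
  have hag' : ∀ i, i ≠ Fin.last n → κ₀ i = Function.update k (Fin.last n) kn i :=
    fun i hi => (hag i hi).symm
  have hDkn : ∀ s₀ : Finset (catV n (Function.update k (Fin.last n) kn)),
      (∀ x ∈ s₀, notLL x) → s₀.card ≤ D := by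
    intro s₀ hcore
    have hsub : s₀ ⊆ (univ : Finset (catV n (Function.update k (Fin.last n) kn))).filter
        (fun x => notLL x) := fun x hx => mem_filter.2 ⟨mem_univ _, hcore x hx⟩
    calc s₀.card ≤ _ := Finset.card_le_card hsub
      _ = D := core_card_transfer hag hag'
  have hfun : indepCount (caterpillar (n+1) (Function.update k (Fin.last n) kn))
      = fun t => (∑ s ∈ range (D+1), aCnt n κ₀ s * condChoose kn t s) + bCnt n κ₀ t := by
    funext t
    rw [decomp n (Function.update k (Fin.last n) kn) t D hDkn, Function.update_self]
    congr 1
    · exact Finset.sum_congr rfl (fun s _ => by rw [aCnt_transfer hag hag' s])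
    · exact bCnt_transfer hag hag' t
  rw [hfun]
  exact hK kn hkn
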